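/- With D_ρ = Σᵢ λᵢ eᵢ, Φ(D_ρ) = Σⱼ μⱼ pⱼ, b_{ij} = Tr(Φ(eᵢ)pⱼ), define H^λ(b) = Σᵢ λᵢ Σⱼ η(b_{ij}) and S_ρ(Φ) = Σᵢ λᵢ S(Φ(eᵢ)). Then S_ρ(Φ) ≤ H^λ(b) ≤ S(Φ(D_ρ)). -/

import Mathlib

open Matrix BigOperators ComplexOrder

/-- Entropy function `η(t) = -t log t` (with `η(0)=0` since `Real.log 0 = 0`). -/
noncomputable def eta (t : ℝ) : ℝ := -(t * Real.log t)

/-- Von Neumann entropy of a matrix: sum of `η` over eigenvalues (0 if not Hermitian). -/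
noncomputable def vnEntropy {n : ℕ} (D : Matrix (Fin n) (Fin n) ℂ) : ℝ :=
  if h : D.IsHermitian then ∑ i, eta (h.eigenvalues i) else 0

/-- Positive, unital, trace-preserving linear map on `M_n(ℂ)`. -/
def IsPUTP {n : ℕ} (Φ : Matrix (Fin n) (Fin n) ℂ →ₗ[ℂ] Matrix (Fin n) (Fin n) ℂ) : Prop :=
  (∀ x, x.PosSemidef → (Φ x).PosSemidef) ∧ Φ 1 = 1 ∧ ∀ x, (Φ x).trace = x.trace

/-- A family of mutually orthogonal rank-one (trace-one) self-adjoint projections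
summing to the identity. -/
def IsSpectralFamily {n : ℕ} (e : Fin n → Matrix (Fin n) (Fin n) ℂ) : Prop :=
  (∀ i, (e i).IsHermitian) ∧ (∀ i j, e i * e j = if i = j then e i else 0) ∧
    (∑ i, e i = 1) ∧ (∀ i, (e i).trace = 1)

lemma eta_eq : eta = Real.negMulLog := by
  funext t; simp [eta, Real.negMulLog, neg_mul]

lemma eta_jensen {m : ℕ} (w x : Fin m → ℝ) (hw : ∀ k, 0 ≤ w k)
    (hw1 : ∑ k, w k = 1) (hx : ∀ k, 0 ≤ x k) :
    ∑ k, w k * eta (x k) ≤ eta (∑ k, w k * x k) := by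
  have h := Real.concaveOn_negMulLog.le_map_sum (t := Finset.univ) (w := w) (p := x)
    (fun k _ => hw k) hw1 (fun k _ => hx k)
  simpa [eta_eq, smul_eq_mul] using h

lemma psd_diag {n : ℕ} {M : Matrix (Fin n) (Fin n) ℂ} (hM : M.PosSemidef) (i : Fin n) :
    M i i = ((M i i).re : ℂ) ∧ 0 ≤ (M i i).re := by
  have h' : (0 : ℂ) ≤ M i i := hM.diag_nonneg
  rw [Complex.le_def] at h'
  simp at h'
  exact ⟨by rw [Complex.ext_iff]; simp [h'.2.symm], h'.1⟩

lemma psd_trace_nonneg {n : ℕ} {M : Matrix (Fin n) (Fin n) ℂ} (hM : M.PosSemidef) :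
    0 ≤ M.trace := by
  rw [Matrix.trace]
  refine Finset.sum_nonneg fun i _ => ?_
  have h := psd_diag hM i
  rw [show M.diag i = M i i from rfl, h.1]
  exact_mod_cast h.2

lemma trace_mul_psd_nonneg {n : ℕ} {A B : Matrix (Fin n) (Fin n) ℂ}
    (hA : A.PosSemidef) (hB : B.PosSemidef) : 0 ≤ (A * B).trace := by
  obtain ⟨C, rfl⟩ : ∃ C, B = Cᴴ * C := by
    open scoped MatrixOrder in
    obtain ⟨C, hC⟩ := CStarAlgebra.nonneg_iff_eq_star_mul_self.mp hB.nonneg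
    exact ⟨C, hC⟩
  rw [← mul_assoc, Matrix.trace_mul_cycle]
  exact psd_trace_nonneg (hA.mul_mul_conjTranspose_same C)

lemma spectral_psd {n : ℕ} {p : Fin n → Matrix (Fin n) (Fin n) ℂ}
    (hp : IsSpectralFamily p) (j : Fin n) : (p j).PosSemidef := by
  suffices h : p j = (p j)ᴴ * p j by rw [h]; exact posSemidef_conjTranspose_mul_self _
  rw [(hp.1 j).eq]
  simpa using (hp.2.1 j j).symm

lemma exists_ds {n : ℕ} {A : Matrix (Fin n) (Fin n) ℂ} (hA : A.IsHermitian)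
    {p : Fin n → Matrix (Fin n) (Fin n) ℂ} (hp : IsSpectralFamily p) :
    ∃ c : Fin n → Fin n → ℝ,
      (∀ j k, 0 ≤ c j k) ∧ (∀ j, ∑ k, c j k = 1) ∧ (∀ k, ∑ j, c j k = 1) ∧
      (∀ j, (A * p j).trace = ∑ k, (hA.eigenvalues k : ℂ) * (c j k : ℂ)) ∧
      (∀ (μ : Fin n → ℝ), A = (∑ j, (μ j : ℂ) • p j) →
        ∀ k, hA.eigenvalues k = ∑ j, μ j * c j k) := by
  set U : Matrix (Fin n) (Fin n) ℂ := (hA.eigenvectorUnitary : Matrix (Fin n) (Fin n) ℂ) with hUdef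
  have hU1 : star U * U = 1 := mem_unitaryGroup_iff'.mp hA.eigenvectorUnitary.2
  have hU2 : U * star U = 1 := mem_unitaryGroup_iff.mp hA.eigenvectorUnitary.2
  set M : Fin n → Matrix (Fin n) (Fin n) ℂ := fun j => star U * p j * U with hMdef
  have hMpsd : ∀ j, (M j).PosSemidef := fun j => by
    simpa [hMdef, Matrix.star_eq_conjTranspose] using
      (spectral_psd hp j).conjTranspose_mul_mul_same U
  refine ⟨fun j k => ((M j) k k).re, fun j k => (psd_diag (hMpsd j) k).2, ?_, ?_, ?_, ?_⟩
  · -- row sums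
    intro j
    have htr : (M j).trace = 1 := by
      rw [hMdef]
      calc (star U * p j * U).trace = (U * (star U * p j)).trace := by
            rw [Matrix.trace_mul_comm]
          _ = (p j).trace := by rw [← mul_assoc, hU2, one_mul]
          _ = 1 := hp.2.2.2 j
    have := congrArg Complex.re htr
    simpa [Matrix.trace, Matrix.diag, Complex.re_sum] using this
  · -- column sums
    intro k
    have hsum : ∑ j, M j = 1 := by
      rw [hMdef]
      have : ∑ j, star U * p j * U = star U * (∑ j, p j) * U := by
        rw [Finset.mul_sum, Finset.sum_mul]
      rw [this, hp.2.2.1, mul_one, hU1]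
    have h1 : (∑ j, M j) k k = 1 := by rw [hsum]; simp [Matrix.one_apply]
    have h2 : ∑ j, ((M j) k k) = (1 : ℂ) := by
      rw [← h1]; simp [Matrix.sum_apply]
    have := congrArg Complex.re h2
    simpa [Complex.re_sum] using this
  · -- trace formula
    intro j
    conv_lhs => rw [hA.spectral_theorem, Unitary.conjStarAlgAut_apply]
    rw [show U * diagonal (RCLike.ofReal ∘ hA.eigenvalues) * star U * p j
        = U * (diagonal (RCLike.ofReal ∘ hA.eigenvalues) * (star U * p j)) from by
          simp [mul_assoc],
      Matrix.trace_mul_comm,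
      show diagonal (RCLike.ofReal ∘ hA.eigenvalues) * (star U * p j) * U
        = diagonal (RCLike.ofReal ∘ hA.eigenvalues) * M j from by simp [hMdef, mul_assoc]]
    have : (diagonal (RCLike.ofReal ∘ hA.eigenvalues) * M j).trace
        = ∑ k, (hA.eigenvalues k : ℂ) * (M j) k k := by
      simp [Matrix.trace, Matrix.diag, Matrix.diagonal_mul]
    rw [this]
    exact Finset.sum_congr rfl fun k _ => by rw [← (psd_diag (hMpsd j) k).1]
  · -- eigenvalue formula
    intro μ hdec k
    have hdiag : star U * A * U = diagonal (RCLike.ofReal ∘ hA.eigenvalues) := by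
      have := hA.conjStarAlgAut_star_eigenvectorUnitary
      rwa [Unitary.conjStarAlgAut_apply, Unitary.coe_star, star_star] at this
    have hAU : star U * A * U = ∑ j, (μ j : ℂ) • M j := by
      rw [hdec, hMdef, Finset.mul_sum, Finset.sum_mul]
      exact Finset.sum_congr rfl fun j _ => by
        rw [Matrix.mul_smul, Matrix.smul_mul]
    have hk : (hA.eigenvalues k : ℂ) = ∑ j, (μ j : ℂ) * (M j) k k := by
      have := congrArg (fun X => X k k) (hAU.symm.trans hdiag)
      simpa [Matrix.diagonal_apply_eq, Matrix.sum_apply, Matrix.smul_apply, smul_eq_mul]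
        using this.symm
    have := congrArg Complex.re hk
    simpa [Complex.re_sum, Complex.re_ofReal_mul] using this

lemma ds_sum_le {m : ℕ} (c : Fin m → Fin m → ℝ) (x : Fin m → ℝ)
    (hc : ∀ j k, 0 ≤ c j k) (hrow : ∀ j, ∑ k, c j k = 1) (hcol : ∀ k, ∑ j, c j k = 1)
    (hx : ∀ k, 0 ≤ x k) :
    ∑ k, eta (x k) ≤ ∑ j, eta (∑ k, c j k * x k) := by
  calc ∑ k, eta (x k) = ∑ k, (∑ j, c j k) * eta (x k) := by
        simp only [hcol, one_mul]
    _ = ∑ j, ∑ k, c j k * eta (x k) := by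
        rw [Finset.sum_comm]
        simp [Finset.sum_mul]
    _ ≤ ∑ j, eta (∑ k, c j k * x k) :=
        Finset.sum_le_sum fun j _ => eta_jensen (c j) x (hc j) (hrow j) hx

lemma entropy_le_pinched {n : ℕ} {A : Matrix (Fin n) (Fin n) ℂ} (hA : A.PosSemidef)
    {p : Fin n → Matrix (Fin n) (Fin n) ℂ} (hp : IsSpectralFamily p) :
    ∑ k, eta (hA.1.eigenvalues k) ≤ ∑ j, eta ((A * p j).trace.re) := by
  obtain ⟨c, hc, hrow, hcol, htrace, -⟩ := exists_ds hA.1 hp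
  have hre : ∀ j, (A * p j).trace.re = ∑ k, c j k * hA.1.eigenvalues k := by
    intro j
    have := congrArg Complex.re (htrace j)
    simpa [Complex.re_sum, Complex.re_ofReal_mul, mul_comm] using this
  calc ∑ k, eta (hA.1.eigenvalues k)
      ≤ ∑ j, eta (∑ k, c j k * hA.1.eigenvalues k) :=
        ds_sum_le c _ hc hrow hcol hA.eigenvalues_nonneg
    _ = ∑ j, eta ((A * p j).trace.re) := by
        exact Finset.sum_congr rfl fun j _ => by rw [hre j]

lemma pinched_eq_entropy {n : ℕ} {A : Matrix (Fin n) (Fin n) ℂ} (hA : A.PosSemidef)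
    {p : Fin n → Matrix (Fin n) (Fin n) ℂ} (hp : IsSpectralFamily p)
    (μ : Fin n → ℝ) (hdec : A = ∑ j, (μ j : ℂ) • p j) :
    ∑ j, eta (μ j) = ∑ k, eta (hA.1.eigenvalues k) := by
  obtain ⟨c, hc, hrow, hcol, htrace, heig⟩ := exists_ds hA.1 hp
  have hμtr : ∀ j, ((μ j : ℂ)) = (A * p j).trace := by
    intro j
    rw [hdec, Finset.sum_mul, Matrix.trace_sum]
    have h : ∀ i : Fin n, ((μ i : ℂ) • p i * p j).trace = if i = j then (μ j : ℂ) else 0 := by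
      intro i
      rw [Matrix.smul_mul, Matrix.trace_smul, hp.2.1 i j]
      by_cases h : i = j <;> simp [h, hp.2.2.2 j]
    rw [Finset.sum_congr rfl fun i _ => h i]
    simp
  have hμnn : ∀ j, 0 ≤ μ j := by
    intro j
    have h0 : (0:ℂ) ≤ (μ j : ℂ) := by
      rw [hμtr j]; exact trace_mul_psd_nonneg hA (spectral_psd hp j)
    exact_mod_cast h0
  have hμc : ∀ j, μ j = ∑ k, c j k * hA.1.eigenvalues k := by
    intro j
    have := congrArg Complex.re ((hμtr j).trans (htrace j))
    simpa [Complex.re_sum, Complex.re_ofReal_mul, mul_comm] using this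
  have hνc : ∀ k, hA.1.eigenvalues k = ∑ j, c j k * μ j := by
    intro k
    rw [heig μ hdec k]
    exact Finset.sum_congr rfl fun j _ => mul_comm _ _
  refine le_antisymm ?_ ?_
  · have h := ds_sum_le (fun k j => c j k) μ (fun k j => hc j k) hcol hrow hμnn
    calc ∑ j, eta (μ j) ≤ ∑ k, eta (∑ j, c j k * μ j) := h
      _ = ∑ k, eta (hA.1.eigenvalues k) :=
        Finset.sum_congr rfl fun k _ => by rw [← hνc k]
  · have h := ds_sum_le c (hA.1.eigenvalues) hc hrow hcol hA.eigenvalues_nonneg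
    calc ∑ k, eta (hA.1.eigenvalues k) ≤ ∑ j, eta (∑ k, c j k * hA.1.eigenvalues k) := h
      _ = ∑ j, eta (μ j) := Finset.sum_congr rfl fun j _ => by rw [← hμc j]

theorem stmt_12 {n : ℕ} (Φ : Matrix (Fin n) (Fin n) ℂ →ₗ[ℂ] Matrix (Fin n) (Fin n) ℂ)
    (hΦ : IsPUTP Φ)
    (D : Matrix (Fin n) (Fin n) ℂ) (hD : D.PosSemidef) (htr : D.trace = 1)
    (lam mu : Fin n → ℝ) (e p : Fin n → Matrix (Fin n) (Fin n) ℂ)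
    (he : IsSpectralFamily e) (hp : IsSpectralFamily p)
    (hDdec : D = ∑ i, (lam i : ℂ) • e i)
    (hΦDdec : Φ D = ∑ j, (mu j : ℂ) • p j)
    (b : Fin n → Fin n → ℝ)
    (hb : ∀ i j, (b i j : ℂ) = (Φ (e i) * p j).trace) :
    (∑ i, lam i * vnEntropy (Φ (e i))) ≤ (∑ i, lam i * ∑ j, eta (b i j)) ∧
    (∑ i, lam i * ∑ j, eta (b i j)) ≤ vnEntropy (Φ D) := by
  have hΦpos := hΦ.1
  have hΦei : ∀ i, (Φ (e i)).PosSemidef := fun i => hΦpos _ (spectral_psd he i)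
  have hΦD : (Φ D).PosSemidef := hΦpos _ hD
  -- b i j = real part of the trace
  have hbre : ∀ i j, (Φ (e i) * p j).trace.re = b i j := fun i j => by
    rw [← hb i j]; simp
  have hbnn : ∀ i j, 0 ≤ b i j := by
    intro i j
    have h0 : (0:ℂ) ≤ (b i j : ℂ) := by
      rw [hb i j]; exact trace_mul_psd_nonneg (hΦei i) (spectral_psd hp j)
    exact_mod_cast h0
  -- lam is nonnegative
  have hDe : ∀ i, (D * e i).trace = (lam i : ℂ) := by
    intro i
    rw [hDdec, Finset.sum_mul, Matrix.trace_sum]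
    have h : ∀ l : Fin n, ((lam l : ℂ) • e l * e i).trace = if l = i then (lam i : ℂ) else 0 := by
      intro l
      rw [Matrix.smul_mul, Matrix.trace_smul, he.2.1 l i]
      by_cases h : l = i <;> simp [h, he.2.2.2 i]
    rw [Finset.sum_congr rfl fun l _ => h l]
    simp
  have hlamnn : ∀ i, 0 ≤ lam i := by
    intro i
    have h0 : (0:ℂ) ≤ (lam i : ℂ) := by
      rw [← hDe i]; exact trace_mul_psd_nonneg hD (spectral_psd he i)
    exact_mod_cast h0
  -- lam sums to 1
  have hlam1 : ∑ i, lam i = 1 := by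
    have h1 : ((∑ i, lam i : ℝ) : ℂ) = 1 := by
      push_cast
      rw [← htr, hDdec, Matrix.trace_sum]
      exact (Finset.sum_congr rfl fun i _ => by
        rw [Matrix.trace_smul, he.2.2.2 i, smul_eq_mul, mul_one]).symm
    exact_mod_cast h1
  -- mu j = ∑ i, lam i * b i j
  have hmutr : ∀ j, (Φ D * p j).trace = (mu j : ℂ) := by
    intro j
    rw [hΦDdec, Finset.sum_mul, Matrix.trace_sum]
    have h : ∀ l : Fin n, ((mu l : ℂ) • p l * p j).trace = if l = j then (mu j : ℂ) else 0 := by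
      intro l
      rw [Matrix.smul_mul, Matrix.trace_smul, hp.2.1 l j]
      by_cases h : l = j <;> simp [h, hp.2.2.2 j]
    rw [Finset.sum_congr rfl fun l _ => h l]
    simp
  have hmub : ∀ j, mu j = ∑ i, lam i * b i j := by
    intro j
    have hΦlin : Φ D = ∑ i, (lam i : ℂ) • Φ (e i) := by
      rw [hDdec, map_sum]
      exact Finset.sum_congr rfl fun i _ => by rw [_root_.map_smul]
    have h1 : (mu j : ℂ) = ∑ i, (lam i : ℂ) * (b i j : ℂ) := by
      rw [← hmutr j, hΦlin, Finset.sum_mul, Matrix.trace_sum]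
      exact Finset.sum_congr rfl fun i _ => by
        rw [Matrix.smul_mul, Matrix.trace_smul, ← hb i j, smul_eq_mul]
    have := congrArg Complex.re h1
    simpa [Complex.re_sum] using this
  constructor
  · -- first inequality
    refine Finset.sum_le_sum fun i _ => mul_le_mul_of_nonneg_left ?_ (hlamnn i)
    rw [vnEntropy, dif_pos (hΦei i).1]
    calc ∑ k, eta ((hΦei i).1.eigenvalues k)
        ≤ ∑ j, eta ((Φ (e i) * p j).trace.re) := entropy_le_pinched (hΦei i) hp
      _ = ∑ j, eta (b i j) := Finset.sum_congr rfl fun j _ => by rw [hbre i j]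
  · -- second inequality
    have hvn : vnEntropy (Φ D) = ∑ j, eta (mu j) := by
      rw [vnEntropy, dif_pos hΦD.1]
      exact (pinched_eq_entropy hΦD hp mu hΦDdec).symm
    rw [hvn]
    calc ∑ i, lam i * ∑ j, eta (b i j)
        = ∑ j, ∑ i, lam i * eta (b i j) := by
          rw [Finset.sum_comm]
          exact Finset.sum_congr rfl fun i _ => by rw [Finset.mul_sum]
      _ ≤ ∑ j, eta (∑ i, lam i * b i j) :=
          Finset.sum_le_sum fun j _ =>
            eta_jensen lam (fun i => b i j) hlamnn hlam1 (fun i => hbnn i j)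
      _ = ∑ j, eta (mu j) := Finset.sum_congr rfl fun j _ => by rw [← hmub j]
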